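/- Let P be a transition kernel on a measurable space (Γ, 𝒢) such that Γ is (m, ε, ν)-small with unique invariant probability measure π, and let A ∈ 𝒢. Then for every z ∈ Γ and n ∈ ℕ, |π(A) − P^n(z, A)| ≤ (1 − ε)^⌊n/m⌋; consequently P^n(z, A) → π(A) as n → ∞, uniformly in z. -/

import Mathlib

open MeasureTheory ProbabilityTheory

/-- The `n`-step transition kernel. -/
noncomputable def kiter {Γ : Type*} [MeasurableSpace Γ]
    (P : Kernel Γ Γ) : ℕ → Kernel Γ Γ
  | 0 => Kernel.deterministic id measurable_id
  | n + 1 => Kernel.comp P (kiter P n)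

section Aux

variable {Γ : Type*} [MeasurableSpace Γ] (P : Kernel Γ Γ) [IsMarkovKernel P]

instance kiter_markov (n : ℕ) : IsMarkovKernel (kiter P n) := by
  induction n with
  | zero => rw [kiter]; infer_instance
  | succ n ih => rw [kiter]; infer_instance

lemma kiter_add (a b : ℕ) : kiter P (a + b) = (kiter P a).comp (kiter P b) := by
  induction a with
  | zero =>
      rw [Nat.zero_add, kiter, Kernel.deterministic_comp_eq_map, Kernel.map_id]
  | succ a ih =>
      rw [Nat.succ_add, kiter, kiter, ih, Kernel.comp_assoc]

lemma integ_bd (μ : Measure Γ) [IsFiniteMeasure μ] {f : Γ → ℝ} (hf : Measurable f)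
    (hb : ∀ u, |f u| ≤ 1) : Integrable f μ :=
  Integrable.mono' (integrable_const 1) hf.aestronglyMeasurable
    (Filter.Eventually.of_forall fun u => by simpa using hb u)

variable {m : ℕ} {ε : ℝ} {ν : Measure Γ} [IsProbabilityMeasure ν] {A : Set Γ}

lemma fval_meas (n : ℕ) (hA : MeasurableSet A) :
    Measurable (fun u => (kiter P n u A).toReal) :=
  ((kiter P n).measurable_coe hA).ennreal_toReal

lemma fval_bd (n : ℕ) (u : Γ) : |(kiter P n u A).toReal| ≤ 1 := by
  rw [abs_of_nonneg ENNReal.toReal_nonneg]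
  exact ENNReal.toReal_mono ENNReal.one_ne_top prob_le_one |>.trans_eq ENNReal.toReal_one

lemma kiter_real (n : ℕ) (hA : MeasurableSet A) (hm : 0 < m) (hn : m ≤ n) (x : Γ) :
    (kiter P n x A).toReal = ∫ u, (kiter P (n - m) u A).toReal ∂(kiter P m x) := by
  have h1 : kiter P n x A = ∫⁻ u, kiter P (n - m) u A ∂(kiter P m x) := by
    conv_lhs => rw [show n = (n - m) + m by omega, kiter_add]
    exact Kernel.comp_apply' _ _ x hA
  rw [h1, ← integral_toReal ((kiter P (n-m)).measurable_coe hA).aemeasurable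
    (Filter.Eventually.of_forall fun u => lt_of_le_of_lt prob_le_one ENNReal.one_lt_top)]

lemma key_ineq (μ₁ μ₂ : Measure Γ) [IsFiniteMeasure μ₁] [IsFiniteMeasure μ₂]
    (hM : μ₁ Set.univ = μ₂ Set.univ) {f : Γ → ℝ} (hf : Measurable f)
    (hb : ∀ u, |f u| ≤ 1) {c : ℝ} (hdiff : ∀ u v, |f u - f v| ≤ c) :
    ∫ u, f u ∂μ₁ - ∫ u, f u ∂μ₂ ≤ c * (μ₁ Set.univ).toReal := by
  set M := (μ₁ Set.univ).toReal with hMdef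
  have hM2 : (μ₂ Set.univ).toReal = M := by rw [hMdef, hM]
  have hMnn : 0 ≤ M := ENNReal.toReal_nonneg
  rcases eq_or_lt_of_le hMnn with h0 | hpos
  · have h1 : μ₁ = 0 := by
      apply Measure.measure_univ_eq_zero.mp
      have := measure_ne_top μ₁ Set.univ
      exact (ENNReal.toReal_eq_zero_iff _).mp h0.symm |>.resolve_right this
    have h2 : μ₂ = 0 := by
      apply Measure.measure_univ_eq_zero.mp
      have := measure_ne_top μ₂ Set.univ
      exact (ENNReal.toReal_eq_zero_iff _).mp (hM2.trans h0.symm) |>.resolve_right this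
    simp [h1, h2, ← h0]
  · have hi1 : Integrable f μ₁ := integ_bd μ₁ hf hb
    have hi2 : Integrable f μ₂ := integ_bd μ₂ hf hb
    have h1 : ∀ v, ∫ u, f u ∂μ₁ ≤ M * (f v + c) := by
      intro v
      calc ∫ u, f u ∂μ₁ ≤ ∫ _, (f v + c) ∂μ₁ := by
            apply integral_mono hi1 (integrable_const _)
            intro u
            show f u ≤ f v + c
            have := (abs_le.mp (hdiff u v)).2
            linarith
        _ = M * (f v + c) := by rw [integral_const, smul_eq_mul, measureReal_def]
    have h2 : M * ∫ u, f u ∂μ₁ ≤ M * (∫ u, f u ∂μ₂ + c * M) := by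
      calc M * ∫ u, f u ∂μ₁ = ∫ _, (∫ u, f u ∂μ₁) ∂μ₂ := by
            rw [integral_const, measureReal_def, hM2, smul_eq_mul]
        _ ≤ ∫ v, M * (f v + c) ∂μ₂ := by
            apply integral_mono (integrable_const _) (((hi2.add (integrable_const c)).const_mul M))
            intro v
            show ∫ (u : Γ), f u ∂μ₁ ≤ M * (f v + c)
            exact h1 v
        _ = M * (∫ u, f u ∂μ₂ + c * M) := by
            rw [integral_const_mul, integral_add hi2 (integrable_const c), integral_const, measureReal_def, hM2,
              smul_eq_mul]
            ring
    have := (mul_le_mul_iff_right₀ hpos).mp h2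
    linarith

lemma contract (hm : 0 < m) (hε : 0 < ε) (hε1 : ε ≤ 1)
    (hsmall : ∀ x : Γ, ∀ B : Set Γ, MeasurableSet B →
      ENNReal.ofReal ε * ν B ≤ kiter P m x B)
    (hA : MeasurableSet A) :
    ∀ n : ℕ, ∀ x y : Γ,
      (kiter P n x A).toReal - (kiter P n y A).toReal ≤ (1 - ε) ^ (n / m) := by
  intro n
  induction n using Nat.strong_induction_on with
  | _ n IH =>
    intro x y
    rcases lt_or_ge n m with hn | hn
    · rw [Nat.div_eq_of_lt hn, pow_zero]
      have b1 := fval_bd (P := P) (A := A) n x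
      have b2 := fval_bd (P := P) (A := A) n y
      rw [abs_of_nonneg ENNReal.toReal_nonneg] at b1
      have : (0:ℝ) ≤ (kiter P n y A).toReal := ENNReal.toReal_nonneg
      linarith
    · set k := n - m with hk
      have hklt : k < n := by omega
      set c : ℝ := (1 - ε) ^ (k / m) with hc
      set η : Measure Γ := ENNReal.ofReal ε • ν with hη
      haveI : IsFiniteMeasure η := by
        constructor
        rw [hη, Measure.smul_apply, smul_eq_mul, measure_univ, mul_one]
        exact ENNReal.ofReal_lt_top
      have hle : ∀ z : Γ, η ≤ kiter P m z := by
        intro z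
        rw [Measure.le_iff]
        intro s hs
        simpa [hη, Measure.smul_apply, smul_eq_mul] using hsmall z s hs
      have hmass : ∀ z : Γ, (kiter P m z - η) Set.univ = 1 - ENNReal.ofReal ε := by
        intro z
        rw [Measure.sub_apply MeasurableSet.univ (hle z), measure_univ, hη,
          Measure.smul_apply, smul_eq_mul, measure_univ, mul_one]
      haveI hfin : ∀ z : Γ, IsFiniteMeasure (kiter P m z - η) := fun z =>
        isFiniteMeasure_of_le (kiter P m z) Measure.sub_le
      have hsplit : ∀ z : Γ, ∫ u, (kiter P k u A).toReal ∂(kiter P m z)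
          = ∫ u, (kiter P k u A).toReal ∂(kiter P m z - η)
            + ∫ u, (kiter P k u A).toReal ∂η := by
        intro z
        conv_lhs => rw [← Measure.sub_add_cancel_of_le (hle z)]
        exact integral_add_measure (integ_bd _ (fval_meas P k hA) (fval_bd (P := P) k))
          (integ_bd _ (fval_meas P k hA) (fval_bd (P := P) k))
      have hdiff : ∀ u v : Γ, |(kiter P k u A).toReal - (kiter P k v A).toReal| ≤ c :=
        fun u v => abs_sub_le_iff.mpr ⟨IH k hklt u v, IH k hklt v u⟩
      have hkey := key_ineq (kiter P m x - η) (kiter P m y - η)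
        (by rw [hmass x, hmass y]) (fval_meas P k hA) (fval_bd (P := P) k) hdiff
      rw [kiter_real P n hA hm hn x, kiter_real P n hA hm hn y, hsplit x, hsplit y]
      have hMval : ((kiter P m x - η) Set.univ).toReal = 1 - ε := by
        rw [hmass x, ENNReal.toReal_sub_of_le (ENNReal.ofReal_le_one.mpr hε1)
          ENNReal.one_ne_top, ENNReal.toReal_one, ENNReal.toReal_ofReal hε.le]
      rw [hMval] at hkey
      have hdivs : n / m = k / m + 1 := by rw [hk]; exact Nat.div_eq_sub_div hm hn
      rw [hdivs, pow_succ]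
      linarith

lemma kiter_inv (π : Measure Γ) [IsProbabilityMeasure π]
    (hinv : ∀ A : Set Γ, MeasurableSet A → π A = ∫⁻ x, P x A ∂π) :
    ∀ n : ℕ, ∀ B : Set Γ, MeasurableSet B → π B = ∫⁻ y, kiter P n y B ∂π := by
  intro n
  induction n with
  | zero =>
    intro B hB
    simp only [kiter, Kernel.deterministic_apply' _ _ hB, id_eq]
    exact (lintegral_indicator_one hB).symm
  | succ n IH =>
    intro B hB
    have hbind : π.bind (fun y => kiter P n y) = π := by
      ext s hs
      rw [Measure.bind_apply hs (kiter P n).measurable.aemeasurable]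
      exact (IH s hs).symm
    calc π B = ∫⁻ u, P u B ∂π := hinv B hB
      _ = ∫⁻ u, P u B ∂(π.bind (fun y => kiter P n y)) := by rw [hbind]
      _ = ∫⁻ y, ∫⁻ u, P u B ∂(kiter P n y) ∂π :=
          MeasureTheory.Measure.lintegral_bind (kiter P n).measurable.aemeasurable (P.measurable_coe hB).aemeasurable
      _ = ∫⁻ y, kiter P (n+1) y B ∂π := by
          congr 1
          ext y
          exact (Kernel.comp_apply' P (kiter P n) y hB).symm

theorem stmt17' (P : Kernel Γ Γ) [IsMarkovKernel P]
    (m : ℕ) (hm : 0 < m) (ε : ℝ) (hε : 0 < ε) (hε1 : ε ≤ 1)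
    (ν : Measure Γ) [IsProbabilityMeasure ν]
    (hsmall : ∀ x : Γ, ∀ B : Set Γ, MeasurableSet B →
      ENNReal.ofReal ε * ν B ≤ kiter P m x B)
    (π : Measure Γ) [IsProbabilityMeasure π]
    (hinv : ∀ A : Set Γ, MeasurableSet A → π A = ∫⁻ x, P x A ∂π)
    (huniq : ∀ π' : Measure Γ, IsProbabilityMeasure π' →
      (∀ A : Set Γ, MeasurableSet A → π' A = ∫⁻ x, P x A ∂π') → π' = π)
    (A : Set Γ) (hA : MeasurableSet A) :
    (∀ z : Γ, ∀ n : ℕ,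
      |(π A).toReal - (kiter P n z A).toReal| ≤ (1 - ε) ^ (n / m)) ∧
    TendstoUniformly (fun n : ℕ => fun z : Γ => (kiter P n z A).toReal)
      (fun _ : Γ => (π A).toReal) Filter.atTop := by
  have hcontr := contract (P := P) hm hε hε1 hsmall hA
  have hbound : ∀ z : Γ, ∀ n : ℕ,
      |(π A).toReal - (kiter P n z A).toReal| ≤ (1 - ε) ^ (n / m) := by
    intro z n
    set c : ℝ := (1 - ε) ^ (n / m) with hc
    set C : ℝ := (kiter P n z A).toReal with hC
    have hπ : (π A).toReal = ∫ y, (kiter P n y A).toReal ∂π := by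
      rw [kiter_inv P π hinv n A hA,
        ← integral_toReal ((kiter P n).measurable_coe hA).aemeasurable
          (Filter.Eventually.of_forall fun u => lt_of_le_of_lt prob_le_one ENNReal.one_lt_top)]
    have hi : Integrable (fun y => (kiter P n y A).toReal) π :=
      integ_bd π (fval_meas P n hA) (fval_bd (P := P) n)
    rw [abs_le]
    constructor
    · have : ∀ y : Γ, C - c ≤ (kiter P n y A).toReal := by
        intro y
        have := hcontr n z y
        linarith
      have h := integral_mono (integrable_const (C - c)) hi this
      rw [integral_const, measureReal_def, measure_univ, ENNReal.toReal_one, one_smul] at h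
      rw [hπ]; linarith
    · have : ∀ y : Γ, (kiter P n y A).toReal ≤ C + c := by
        intro y
        have := hcontr n y z
        linarith
      have h := integral_mono hi (integrable_const (C + c)) this
      rw [integral_const, measureReal_def, measure_univ, ENNReal.toReal_one, one_smul] at h
      rw [hπ]; linarith
  refine ⟨hbound, ?_⟩
  have hdiv : Filter.Tendsto (fun n : ℕ => n / m) Filter.atTop Filter.atTop := by
    apply Filter.tendsto_atTop_atTop.mpr
    intro b
    exact ⟨b * m, fun n hn => (Nat.le_div_iff_mul_le hm).mpr hn⟩
  have h0 : Filter.Tendsto (fun n : ℕ => (1 - ε) ^ (n / m)) Filter.atTop (nhds 0) :=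
    (tendsto_pow_atTop_nhds_zero_of_lt_one (by linarith) (by linarith)).comp hdiv
  rw [Metric.tendstoUniformly_iff]
  intro δ hδ
  filter_upwards [h0.eventually_lt_const hδ] with n hn z
  rw [Real.dist_eq]
  exact lt_of_le_of_lt (hbound z n) hn

end Aux

/-- Uniform ergodicity: if the whole state space is `(m, ε, ν)`-small and `π` is the
unique invariant probability measure, then for every measurable `A`, every `z`, and
every `n`, `|π(A) − P^n(z,A)| ≤ (1−ε)^⌊n/m⌋`; consequently `P^n(z,A) → π(A)`
uniformly in `z`. -/
theorem stmt17 {Γ : Type*} [MeasurableSpace Γ]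
    (P : Kernel Γ Γ) [IsMarkovKernel P]
    (m : ℕ) (hm : 0 < m) (ε : ℝ) (hε : 0 < ε) (hε1 : ε ≤ 1)
    (ν : Measure Γ) [IsProbabilityMeasure ν]
    (hsmall : ∀ x : Γ, ∀ B : Set Γ, MeasurableSet B →
      ENNReal.ofReal ε * ν B ≤ kiter P m x B)
    (π : Measure Γ) [IsProbabilityMeasure π]
    (hinv : ∀ A : Set Γ, MeasurableSet A → π A = ∫⁻ x, P x A ∂π)
    (huniq : ∀ π' : Measure Γ, IsProbabilityMeasure π' →
      (∀ A : Set Γ, MeasurableSet A → π' A = ∫⁻ x, P x A ∂π') → π' = π)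
    (A : Set Γ) (hA : MeasurableSet A) :
    (∀ z : Γ, ∀ n : ℕ,
      |(π A).toReal - (kiter P n z A).toReal| ≤ (1 - ε) ^ (n / m)) ∧
    TendstoUniformly (fun n : ℕ => fun z : Γ => (kiter P n z A).toReal)
      (fun _ : Γ => (π A).toReal) Filter.atTop := by
  exact stmt17' P m hm ε hε hε1 ν hsmall π hinv huniq A hA
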